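/- Let 0 < q₁ < p₁ ≤ 1, 0 < q₂ < p₂ ≤ 1, let n, m ≥ 1, and let f : [0,1]² → ℝ be continuous. Then for every (x,y) ∈ [0,1]², |B_{n,m}(f;x,y) - f(x,y)| ≤ 2 ω¹(f, δ_n(x)) + 2 ω²(f, δ_m(y)), where δ_n(x) = √( (p₁^{n-1}/[n]_{p₁,q₁})(x - x²) ) and δ_m(y) = √( (p₂^{m-1}/[m]_{p₂,q₂})(y - y²) ). -/

import Mathlib

open Finset Set Filter Topology

/-- The (p,q)-integer `[n]_{p,q} = ∑_{i=0}^{n-1} p^(n-1-i) q^i`. -/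
noncomputable def pqInt (p q : ℝ) (n : ℕ) : ℝ :=
  ∑ i ∈ Finset.range n, p ^ (n - 1 - i) * q ^ i

/-- The (p,q)-factorial `[n]_{p,q}! = ∏_{j=1}^n [j]_{p,q}`. -/
noncomputable def pqFactorial (p q : ℝ) (n : ℕ) : ℝ :=
  ∏ j ∈ Finset.range n, pqInt p q (j + 1)

/-- The (p,q)-binomial coefficient. -/
noncomputable def pqChoose (p q : ℝ) (n k : ℕ) : ℝ :=
  pqFactorial p q n / (pqFactorial p q k * pqFactorial p q (n - k))

/-- The node `p^(n-k) [k]_{p,q} / [n]_{p,q}` of the (p,q)-Bernstein operator. -/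
noncomputable def pqNode (p q : ℝ) (n k : ℕ) : ℝ :=
  p ^ (n - k) * pqInt p q k / pqInt p q n

/-- The basis function
`p^((k(k-1)-n(n-1))/2) C(n,k)_{p,q} x^k ∏_{s=0}^{n-k-1} (p^s - q^s x)`,
where `p^((k(k-1)-n(n-1))/2)` is written as `p^(k(k-1)/2) / p^(n(n-1)/2)`. -/
noncomputable def pqBasis (p q : ℝ) (n k : ℕ) (x : ℝ) : ℝ :=
  (p ^ (k.choose 2) / p ^ (n.choose 2)) * pqChoose p q n k * x ^ k *
    ∏ s ∈ Finset.range (n - k), (p ^ s - q ^ s * x)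

/-- The (p,q)-Bernstein operator `B_{n,p,q}(f;x)`. -/
noncomputable def pqBernstein (p q : ℝ) (n : ℕ) (f : ℝ → ℝ) (x : ℝ) : ℝ :=
  ∑ k ∈ Finset.range (n + 1), pqBasis p q n k x * f (pqNode p q n k)

/-- The bivariate (p,q)-Bernstein operator
`B_{n,m}^{(p₁,q₁),(p₂,q₂)}(f;x,y)`. -/
noncomputable def pqBernstein2 (p₁ q₁ p₂ q₂ : ℝ) (n m : ℕ)
    (f : ℝ → ℝ → ℝ) (x y : ℝ) : ℝ :=
  ∑ k ∈ Finset.range (n + 1), ∑ j ∈ Finset.range (m + 1),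
    pqBasis p₁ q₁ n k x * pqBasis p₂ q₂ m j y *
      f (pqNode p₁ q₁ n k) (pqNode p₂ q₂ m j)

/-- The first partial modulus of continuity (with respect to `x`) on `[0,1]²`. -/
noncomputable def partialModulus₁ (f : ℝ → ℝ → ℝ) (δ : ℝ) : ℝ :=
  sSup {d : ℝ | ∃ y ∈ Set.Icc (0 : ℝ) 1, ∃ x₁ ∈ Set.Icc (0 : ℝ) 1,
    ∃ x₂ ∈ Set.Icc (0 : ℝ) 1, |x₁ - x₂| ≤ δ ∧ d = |f x₁ y - f x₂ y|}

/-- The second partial modulus of continuity (with respect to `y`) on `[0,1]²`. -/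
noncomputable def partialModulus₂ (f : ℝ → ℝ → ℝ) (δ : ℝ) : ℝ :=
  sSup {d : ℝ | ∃ x ∈ Set.Icc (0 : ℝ) 1, ∃ y₁ ∈ Set.Icc (0 : ℝ) 1,
    ∃ y₂ ∈ Set.Icc (0 : ℝ) 1, |y₁ - y₂| ≤ δ ∧ d = |f x y₁ - f x y₂|}


noncomputable def qI (t : ℝ) (n : ℕ) : ℝ := ∑ i ∈ Finset.range n, t ^ i

lemma qI_zero (t : ℝ) : qI t 0 = 0 := by simp [qI]

lemma qI_succ (t : ℝ) (n : ℕ) : qI t (n + 1) = qI t n + t ^ n := by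
  simp [qI, Finset.sum_range_succ]

lemma qI_nonneg {t : ℝ} (ht : 0 < t) (n : ℕ) : 0 ≤ qI t n :=
  Finset.sum_nonneg fun i _ => by positivity

lemma qI_pos {t : ℝ} (ht : 0 < t) {n : ℕ} (hn : 1 ≤ n) : 0 < qI t n := by
  obtain ⟨m, rfl⟩ := Nat.exists_eq_add_of_le hn
  rw [add_comm, qI_succ]
  have h1 := qI_nonneg ht m
  have h2 : (0:ℝ) < t ^ m := by positivity
  linarith

lemma qI_mono {t : ℝ} (ht : 0 < t) {k n : ℕ} (hk : k ≤ n) : qI t k ≤ qI t n := by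
  refine Finset.sum_le_sum_of_subset_of_nonneg (Finset.range_subset_range.2 hk) ?_
  intro i _ _; positivity

lemma qI_geom (t : ℝ) (n : ℕ) : (1 - t) * qI t n = 1 - t ^ n := by
  have := geom_sum_mul t n
  unfold qI
  nlinarith [this]

lemma pqInt_eq {p : ℝ} (hp : p ≠ 0) (q : ℝ) (n : ℕ) :
    pqInt p q n = p ^ (n - 1) * qI (q / p) n := by
  unfold pqInt qI
  rw [Finset.mul_sum]
  refine Finset.sum_congr rfl fun i hi => ?_
  have hi' : i < n := Finset.mem_range.1 hi
  have h1 : n - 1 = (n - 1 - i) + i := by omega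
  rw [div_pow, h1, pow_add]
  field_simp
  rw [Nat.add_sub_cancel]
  ring

lemma pqInt_pos {p q : ℝ} (hp : 0 < p) (hq : 0 < q) {n : ℕ} (hn : 1 ≤ n) :
    0 < pqInt p q n := by
  rw [pqInt_eq hp.ne' q n]
  exact mul_pos (pow_pos hp _) (qI_pos (by positivity) hn)

lemma pqInt_add (p q : ℝ) (a b : ℕ) :
    pqInt p q (a + b) = p ^ a * pqInt p q b + q ^ b * pqInt p q a := by
  unfold pqInt
  rw [add_comm a b, Finset.sum_range_add, Finset.mul_sum, Finset.mul_sum]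
  congr 1
  · refine Finset.sum_congr rfl fun i hi => ?_
    have hi' : i < b := Finset.mem_range.1 hi
    have h1 : b + a - 1 - i = a + (b - 1 - i) := by omega
    rw [h1, pow_add]; ring
  · refine Finset.sum_congr rfl fun i hi => ?_
    have hi' : i < a := Finset.mem_range.1 hi
    have h1 : b + a - 1 - (b + i) = a - 1 - i := by omega
    rw [h1, pow_add]; ring

lemma pqFactorial_pos {p q : ℝ} (hp : 0 < p) (hq : 0 < q) (n : ℕ) :
    0 < pqFactorial p q n := by
  unfold pqFactorial
  exact Finset.prod_pos fun j _ => pqInt_pos hp hq (Nat.succ_le_succ (Nat.zero_le j))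

lemma pqChoose_pos {p q : ℝ} (hp : 0 < p) (hq : 0 < q) (n k : ℕ) :
    0 < pqChoose p q n k := by
  unfold pqChoose
  exact div_pos (pqFactorial_pos hp hq n)
    (mul_pos (pqFactorial_pos hp hq k) (pqFactorial_pos hp hq (n - k)))

lemma pqFactorial_succ (p q : ℝ) (n : ℕ) :
    pqFactorial p q (n + 1) = pqFactorial p q n * pqInt p q (n + 1) := by
  unfold pqFactorial
  rw [Finset.prod_range_succ]

lemma pqChoose_zero {p q : ℝ} (hp : 0 < p) (hq : 0 < q) (n : ℕ) :
    pqChoose p q n 0 = 1 := by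
  unfold pqChoose
  have h := (pqFactorial_pos hp hq n).ne'
  simp [pqFactorial] at h ⊢
  exact h

lemma pqChoose_self {p q : ℝ} (hp : 0 < p) (hq : 0 < q) (n : ℕ) :
    pqChoose p q n n = 1 := by
  unfold pqChoose
  have h := (pqFactorial_pos hp hq n).ne'
  simp [pqFactorial] at h ⊢
  exact h

lemma pqPascal {p q : ℝ} (hp : 0 < p) (hq : 0 < q) {n k : ℕ} (hk : k + 1 ≤ n) :
    pqChoose p q (n + 1) (k + 1) =
      p ^ (k + 1) * pqChoose p q n (k + 1) + q ^ (n - k) * pqChoose p q n k := by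
  have key : pqInt p q (n + 1) =
      p ^ (k + 1) * pqInt p q (n - k) + q ^ (n - k) * pqInt p q (k + 1) := by
    have h := pqInt_add p q (k + 1) (n - k)
    have h2 : k + 1 + (n - k) = n + 1 := by omega
    rw [h2] at h
    exact h
  have hnk : n - k = (n - (k + 1)) + 1 := by omega
  have h3 : n + 1 - (k + 1) = n - k := by omega
  unfold pqChoose
  rw [h3, pqFactorial_succ p q n, hnk, pqFactorial_succ p q (n - (k+1)),
    pqFactorial_succ p q k, ← hnk, key]
  have F1 := (pqFactorial_pos hp hq n).ne'
  have F2 := (pqFactorial_pos hp hq k).ne'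
  have F3 := (pqFactorial_pos hp hq (n - (k+1))).ne'
  have F4 := (pqInt_pos hp hq (show 1 ≤ k + 1 by omega)).ne'
  have F5 := (pqInt_pos hp hq (show 1 ≤ n - k by omega)).ne'
  field_simp

lemma choose2_succ (n : ℕ) : (n + 1).choose 2 = n.choose 2 + n := by
  rw [Nat.choose_succ_succ]
  simp [Nat.choose_one_right, Nat.add_comm]

lemma pqBasis_rec0 {p q : ℝ} (hp : 0 < p) (hq : 0 < q) (n : ℕ) (x : ℝ) :
    pqBasis p q (n + 1) 0 x = (1 - (q / p) ^ n * x) * pqBasis p q n 0 x := by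
  unfold pqBasis
  rw [pqChoose_zero hp hq, pqChoose_zero hp hq]
  have h1 : n + 1 - 0 = (n - 0) + 1 := by omega
  rw [h1, Finset.prod_range_succ, choose2_succ]
  have hpn : (p:ℝ) ^ n ≠ 0 := by positivity
  have hpc : (p:ℝ) ^ n.choose 2 ≠ 0 := by positivity
  rw [pow_add, div_pow]
  field_simp
  simp only [Nat.sub_zero, mul_comm x]
  ring

lemma pqBasis_recTop {p q : ℝ} (hp : 0 < p) (hq : 0 < q) (n : ℕ) (x : ℝ) :
    pqBasis p q (n + 1) (n + 1) x = x * pqBasis p q n n x := by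
  unfold pqBasis
  rw [pqChoose_self hp hq, pqChoose_self hp hq]
  simp [div_self (show (p:ℝ) ^ (n+1).choose 2 ≠ 0 by positivity),
    div_self (show (p:ℝ) ^ n.choose 2 ≠ 0 by positivity), pow_succ]
  ring

lemma pqBasis_recS {p q : ℝ} (hp : 0 < p) (hq : 0 < q) {n k : ℕ} (hk : k + 1 ≤ n) (x : ℝ) :
    pqBasis p q (n + 1) (k + 1) x =
      (1 - (q / p) ^ (n - (k + 1)) * x) * pqBasis p q n (k + 1) x +
        (q / p) ^ (n - k) * x * pqBasis p q n k x := by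
  obtain ⟨a, rfl⟩ : ∃ a, n = (k + 1) + a := ⟨n - (k+1), by omega⟩
  unfold pqBasis
  rw [pqPascal hp hq hk]
  have e1 : k + 1 + a - (k + 1) = a := by omega
  have e2 : k + 1 + a + 1 - (k + 1) = a + 1 := by omega
  have e3 : k + 1 + a - k = a + 1 := by omega
  rw [e1, e2, e3, Finset.prod_range_succ]
  rw [choose2_succ (k + 1 + a), choose2_succ k]
  generalize pqChoose p q (k + 1 + a) (k + 1) = C1
  generalize pqChoose p q (k + 1 + a) k = C0
  have hpa : (p:ℝ) ^ a ≠ 0 := by positivity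
  have hpk : (p:ℝ) ^ k ≠ 0 := by positivity
  have hpc1 : (p:ℝ) ^ (k+1+a).choose 2 ≠ 0 := by positivity
  have hpc3 : (p:ℝ) ^ k.choose 2 ≠ 0 := by positivity
  rw [pow_add, pow_add]
  have hp0 : p ≠ 0 := hp.ne'
  rw [div_pow, div_pow]
  field_simp
  simp only [mul_comm x]
  ring

lemma pqSum_step {p q : ℝ} (hp : 0 < p) (hq : 0 < q) (n : ℕ) (x : ℝ) (g : ℕ → ℝ) :
    ∑ k ∈ Finset.range (n + 2), pqBasis p q (n + 1) k x * g k =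
      ∑ k ∈ Finset.range (n + 1), pqBasis p q n k x *
        ((1 - (q / p) ^ (n - k) * x) * g k + (q / p) ^ (n - k) * x * g (k + 1)) := by
  rw [Finset.sum_range_succ' (fun k => pqBasis p q (n + 1) k x * g k) (n + 1)]
  rw [Finset.sum_range_succ (fun k => pqBasis p q (n + 1) (k + 1) x * g (k + 1)) n]
  have rhs : ∀ k, pqBasis p q n k x *
        ((1 - (q / p) ^ (n - k) * x) * g k + (q / p) ^ (n - k) * x * g (k + 1)) =
      (1 - (q / p) ^ (n - k) * x) * pqBasis p q n k x * g k +
        (q / p) ^ (n - k) * x * pqBasis p q n k x * g (k + 1) := fun k => by ring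
  simp only [rhs]
  rw [Finset.sum_add_distrib]
  rw [Finset.sum_range_succ' (fun k => (1 - (q / p) ^ (n - k) * x) * pqBasis p q n k x * g k) n]
  rw [Finset.sum_range_succ (fun k => (q / p) ^ (n - k) * x * pqBasis p q n k x * g (k + 1)) n]
  rw [pqBasis_recTop hp hq, pqBasis_rec0 hp hq]
  have hstep : ∀ k ∈ Finset.range n, pqBasis p q (n + 1) (k + 1) x * g (k + 1) =
      (1 - (q / p) ^ (n - (k + 1)) * x) * pqBasis p q n (k + 1) x * g (k + 1) +
        (q / p) ^ (n - k) * x * pqBasis p q n k x * g (k + 1) := by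
    intro k hk
    rw [pqBasis_recS hp hq (Finset.mem_range.1 hk) x]
    ring
  rw [Finset.sum_congr rfl hstep, Finset.sum_add_distrib]
  simp only [Nat.sub_self, Nat.sub_zero, pow_zero, one_mul]
  ring

lemma pqUnity {p q : ℝ} (hp : 0 < p) (hq : 0 < q) (n : ℕ) (x : ℝ) :
    ∑ k ∈ Finset.range (n + 1), pqBasis p q n k x = 1 := by
  induction n with
  | zero => simp [pqBasis, pqChoose, pqFactorial]
  | succ n ih =>
    have h := pqSum_step hp hq n x (fun _ => 1)
    simp only [mul_one] at h
    rw [show n + 1 + 1 = n + 2 from rfl, h]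
    have key : ∀ k ∈ Finset.range (n + 1),
        pqBasis p q n k x * (1 - (q / p) ^ (n - k) * x + (q / p) ^ (n - k) * x) =
        pqBasis p q n k x := fun k _ => by ring
    rw [Finset.sum_congr rfl key, ih]

lemma pqMom1 {p q : ℝ} (hp : 0 < p) (hq : 0 < q) (n : ℕ) (x : ℝ) :
    ∑ k ∈ Finset.range (n + 1), pqBasis p q n k x * qI (q / p) k =
      x * qI (q / p) n := by
  induction n with
  | zero => simp [qI]
  | succ n ih =>
    rw [show n + 1 + 1 = n + 2 from rfl, pqSum_step hp hq n x (fun k => qI (q/p) k)]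
    have key : ∀ k ∈ Finset.range (n + 1), pqBasis p q n k x *
        ((1 - (q / p) ^ (n - k) * x) * qI (q/p) k + (q / p) ^ (n - k) * x * qI (q/p) (k + 1)) =
        pqBasis p q n k x * qI (q/p) k + (x * (q/p) ^ n) * pqBasis p q n k x := by
      intro k hk
      have hk' : k ≤ n := Nat.lt_succ_iff.1 (Finset.mem_range.1 hk)
      have hpow : (q/p) ^ (n - k) * (q/p) ^ k = (q/p) ^ n := by
        rw [← pow_add]; congr 1; omega
      rw [qI_succ]
      linear_combination (pqBasis p q n k x * x) * hpow
    rw [Finset.sum_congr rfl key, Finset.sum_add_distrib, ih, ← Finset.mul_sum,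
      pqUnity hp hq, qI_succ]
    ring

lemma pqGeomA {p q : ℝ} (hp : 0 < p) (hq : 0 < q) (n : ℕ) (x : ℝ) :
    ∑ k ∈ Finset.range (n + 1), pqBasis p q n k x * (q / p) ^ k =
      1 - x * (1 - q / p) * qI (q / p) n := by
  induction n with
  | zero => simp [pqBasis, pqChoose, pqFactorial, qI]
  | succ n ih =>
    rw [show n + 1 + 1 = n + 2 from rfl, pqSum_step hp hq n x (fun k => (q/p) ^ k)]
    have key : ∀ k ∈ Finset.range (n + 1), pqBasis p q n k x *
        ((1 - (q / p) ^ (n - k) * x) * (q/p) ^ k + (q / p) ^ (n - k) * x * (q/p) ^ (k + 1)) =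
        pqBasis p q n k x * (q/p) ^ k - (x * (q/p) ^ n * (1 - q/p)) * pqBasis p q n k x := by
      intro k hk
      have hk' : k ≤ n := Nat.lt_succ_iff.1 (Finset.mem_range.1 hk)
      have hpow : (q/p) ^ (n - k) * (q/p) ^ k = (q/p) ^ n := by
        rw [← pow_add]; congr 1; omega
      rw [pow_succ]
      linear_combination (pqBasis p q n k x * x * ((q/p) - 1)) * hpow
    rw [Finset.sum_congr rfl key, Finset.sum_sub_distrib, ih, ← Finset.mul_sum,
      pqUnity hp hq, qI_succ]
    ring

lemma pqMom2 {p q : ℝ} (hp : 0 < p) (hq : 0 < q) (n : ℕ) (x : ℝ) :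
    ∑ k ∈ Finset.range (n + 1), pqBasis p q n k x * (qI (q / p) k) ^ 2 =
      x ^ 2 * ((qI (q / p) n) ^ 2 - qI (q / p) n) + x * qI (q / p) n := by
  induction n with
  | zero => simp [qI]
  | succ n ih =>
    rw [show n + 1 + 1 = n + 2 from rfl, pqSum_step hp hq n x (fun k => (qI (q/p) k) ^ 2)]
    have key : ∀ k ∈ Finset.range (n + 1), pqBasis p q n k x *
        ((1 - (q / p) ^ (n - k) * x) * (qI (q/p) k) ^ 2 +
          (q / p) ^ (n - k) * x * (qI (q/p) (k + 1)) ^ 2) =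
        pqBasis p q n k x * (qI (q/p) k) ^ 2 +
          (2 * x * (q/p) ^ n) * (pqBasis p q n k x * qI (q/p) k) +
          (x * (q/p) ^ n) * (pqBasis p q n k x * (q/p) ^ k) := by
      intro k hk
      have hk' : k ≤ n := Nat.lt_succ_iff.1 (Finset.mem_range.1 hk)
      have hpow : (q/p) ^ (n - k) * (q/p) ^ k = (q/p) ^ n := by
        rw [← pow_add]; congr 1; omega
      rw [qI_succ]
      linear_combination (pqBasis p q n k x * x * (2 * qI (q/p) k + (q/p)^k)) * hpow
    rw [Finset.sum_congr rfl key, Finset.sum_add_distrib, Finset.sum_add_distrib,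
      ih, ← Finset.mul_sum, ← Finset.mul_sum, pqMom1 hp hq, pqGeomA hp hq, qI_succ]
    have hg := qI_geom (q / p) n
    linear_combination (-(x ^ 2) * (q/p) ^ n) * hg

lemma pqNode_eq {p : ℝ} (hp : 0 < p) (q : ℝ) {n k : ℕ} (hk : k ≤ n) :
    pqNode p q n k = qI (q / p) k / qI (q / p) n := by
  cases k with
  | zero => simp [pqNode, pqInt, qI]
  | succ k =>
    unfold pqNode
    rw [pqInt_eq hp.ne' q (k + 1), pqInt_eq hp.ne' q n]
    have h1 : (p:ℝ) ^ (n - (k + 1)) * p ^ (k + 1 - 1) = p ^ (n - 1) := by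
      rw [← pow_add]; congr 1; omega
    rw [show p ^ (n - (k+1)) * (p ^ (k + 1 - 1) * qI (q/p) (k+1)) =
        (p ^ (n - (k+1)) * p ^ (k + 1 - 1)) * qI (q/p) (k+1) by ring, h1]
    rw [mul_div_mul_left _ _ (by positivity : (p:ℝ) ^ (n-1) ≠ 0)]

lemma pqNode_mem {p q : ℝ} (hp : 0 < p) (hq : 0 < q) (hqp : q ≤ p) {n k : ℕ}
    (hn : 1 ≤ n) (hk : k ≤ n) : pqNode p q n k ∈ Set.Icc (0:ℝ) 1 := by
  have ht : 0 < q / p := by positivity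
  rw [pqNode_eq hp q hk]
  have h1 := qI_pos ht hn
  have h2 := qI_nonneg ht k
  have h3 := qI_mono ht hk
  constructor
  · positivity
  · rw [div_le_one h1]; exact h3

lemma pqBasis_nonneg {p q : ℝ} (hp : 0 < p) (hq : 0 < q) (hqp : q ≤ p) {x : ℝ}
    (hx : x ∈ Set.Icc (0:ℝ) 1) (n k : ℕ) : 0 ≤ pqBasis p q n k x := by
  unfold pqBasis
  have h1 : 0 ≤ pqChoose p q n k := (pqChoose_pos hp hq n k).le
  have h2 : (0:ℝ) ≤ x ^ k := pow_nonneg hx.1 k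
  have h3 : 0 ≤ ∏ s ∈ Finset.range (n - k), (p ^ s - q ^ s * x) := by
    refine Finset.prod_nonneg fun s _ => ?_
    have hqs : q ^ s * x ≤ q ^ s := by
      nlinarith [pow_pos hq s, hx.2, hx.1]
    have : q ^ s ≤ p ^ s := pow_le_pow_left₀ hq.le hqp s
    linarith
  have h4 : (0:ℝ) ≤ p ^ k.choose 2 / p ^ n.choose 2 := by positivity
  positivity

lemma pqVar {p q : ℝ} (hp : 0 < p) (hq : 0 < q) {n : ℕ} (hn : 1 ≤ n) (x : ℝ) :
    ∑ k ∈ Finset.range (n + 1), pqBasis p q n k x * (pqNode p q n k - x) ^ 2 =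
      (p ^ (n - 1) / pqInt p q n) * (x - x ^ 2) := by
  have ht : 0 < q / p := by positivity
  have hT : 0 < qI (q / p) n := qI_pos ht hn
  have key : ∀ k ∈ Finset.range (n + 1),
      pqBasis p q n k x * (pqNode p q n k - x) ^ 2 =
        (pqBasis p q n k x * (qI (q/p) k) ^ 2) * (1 / (qI (q/p) n) ^ 2) -
          (pqBasis p q n k x * qI (q/p) k) * (2 * x / qI (q/p) n) +
          pqBasis p q n k x * x ^ 2 := by
    intro k hk
    rw [pqNode_eq hp q (Nat.lt_succ_iff.1 (Finset.mem_range.1 hk))]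
    field_simp
    ring
  rw [Finset.sum_congr rfl key, Finset.sum_add_distrib, Finset.sum_sub_distrib,
    ← Finset.sum_mul, ← Finset.sum_mul, ← Finset.sum_mul,
    pqMom2 hp hq, pqMom1 hp hq, pqUnity hp hq]
  rw [pqInt_eq hp.ne' q n]
  have hpn : (p:ℝ) ^ (n - 1) ≠ 0 := by positivity
  rw [show p ^ (n-1) / (p ^ (n-1) * qI (q/p) n) = 1 / qI (q/p) n by
    rw [div_mul_eq_div_div, div_self hpn]]
  field_simp
  ring

lemma chop (g : ℝ → ℝ) {a x δ ω : ℝ} (ha : a ∈ Set.Icc (0:ℝ) 1)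
    (hx : x ∈ Set.Icc (0:ℝ) 1) (hδ : 0 < δ) (hω : 0 ≤ ω)
    (hstep : ∀ u ∈ Set.Icc (0:ℝ) 1, ∀ v ∈ Set.Icc (0:ℝ) 1, |u - v| ≤ δ → |g u - g v| ≤ ω) :
    |g a - g x| ≤ (1 + (a - x) ^ 2 / δ ^ 2) * ω := by
  set t := |a - x| with hdef
  have ht0 : 0 ≤ t := abs_nonneg _
  have hsq : (a - x) ^ 2 = t ^ 2 := (sq_abs _).symm
  by_cases htδ : t ≤ δ
  · have h1 : |g a - g x| ≤ ω := hstep a ha x hx htδ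
    have h2 : (1:ℝ) ≤ 1 + (a - x) ^ 2 / δ ^ 2 := by
      have : (0:ℝ) ≤ (a - x) ^ 2 / δ ^ 2 := by positivity
      linarith
    nlinarith
  · push_neg at htδ
    set N := ⌈t / δ⌉₊ with hN
    have hN1 : 1 ≤ N := by
      rw [hN]
      exact Nat.one_le_ceil_iff.2 (div_pos (hδ.trans htδ) hδ)
    have hNpos : (0:ℝ) < N := by exact_mod_cast hN1
    have hNge : t / δ ≤ N := Nat.le_ceil _
    have hNlt : (N:ℝ) < t / δ + 1 := Nat.ceil_lt_add_one (by positivity)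
    set c : ℕ → ℝ := fun i => x + i * (a - x) / N with hc
    have hc0 : c 0 = x := by simp [hc]
    have hcN : c N = a := by
      simp only [hc]
      field_simp
      ring
    have hmem : ∀ i : ℕ, i ≤ N → c i ∈ Set.Icc (0:ℝ) 1 := by
      intro i hi
      have hl0 : (0:ℝ) ≤ (i:ℝ) / N := by positivity
      have hl1 : (i:ℝ) / N ≤ 1 := by
        rw [div_le_one hNpos]; exact_mod_cast hi
      have hci : c i = (1 - (i:ℝ)/N) * x + ((i:ℝ)/N) * a := by
        simp only [hc]; field_simp; ring
      rw [hci]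
      constructor
      · nlinarith [hx.1, ha.1]
      · nlinarith [hx.2, ha.2]
    have htel : g a - g x = ∑ i ∈ Finset.range N, (g (c (i + 1)) - g (c i)) := by
      rw [Finset.sum_range_sub (fun i => g (c i)), hc0, hcN]
    have hterm : ∀ i ∈ Finset.range N, |g (c (i + 1)) - g (c i)| ≤ ω := by
      intro i hi
      have hi' : i < N := Finset.mem_range.1 hi
      have hdiff : c (i + 1) - c i = (a - x) / N := by
        simp only [hc]
        push_cast
        field_simp
        ring
      have habs : |c (i + 1) - c i| ≤ δ := by
        rw [hdiff, abs_div, abs_of_pos hNpos]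
        rw [div_le_iff₀ hNpos]
        have := (div_le_iff₀ hδ).1 hNge
        linarith [this]
      exact hstep _ (hmem (i+1) hi') _ (hmem i hi'.le) habs
    have hsum : |g a - g x| ≤ N * ω := by
      rw [htel]
      calc |∑ i ∈ Finset.range N, (g (c (i + 1)) - g (c i))|
          ≤ ∑ i ∈ Finset.range N, |g (c (i + 1)) - g (c i)| :=
            Finset.abs_sum_le_sum_abs _ _
        _ ≤ ∑ i ∈ Finset.range N, ω := Finset.sum_le_sum hterm
        _ = N * ω := by rw [Finset.sum_const, Finset.card_range, nsmul_eq_mul]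
    have hNbound : (N:ℝ) ≤ 1 + t ^ 2 / δ ^ 2 := by
      have h1 : 1 ≤ t / δ := by
        rw [le_div_iff₀ hδ]; linarith
      have h2 : t / δ ≤ (t / δ) ^ 2 := by nlinarith
      have h3 : (t / δ) ^ 2 = t ^ 2 / δ ^ 2 := by rw [div_pow]
      linarith
    calc |g a - g x| ≤ N * ω := hsum
      _ ≤ (1 + t ^ 2 / δ ^ 2) * ω := mul_le_mul_of_nonneg_right hNbound hω
      _ = (1 + (a - x) ^ 2 / δ ^ 2) * ω := by rw [hsq]

lemma pqCore {p q : ℝ} (hq : 0 < q) (hqp : q < p) (hp : p ≤ 1) {n : ℕ} (hn : 1 ≤ n)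
    (g : ℝ → ℝ) {x : ℝ} (hx : x ∈ Set.Icc (0:ℝ) 1) {ω : ℝ} (hω : 0 ≤ ω)
    (hstep : ∀ u ∈ Set.Icc (0:ℝ) 1, ∀ v ∈ Set.Icc (0:ℝ) 1,
      |u - v| ≤ Real.sqrt ((p ^ (n - 1) / pqInt p q n) * (x - x ^ 2)) → |g u - g v| ≤ ω) :
    |(∑ k ∈ Finset.range (n + 1), pqBasis p q n k x * g (pqNode p q n k)) - g x| ≤ 2 * ω := by
  have hp0 : 0 < p := hq.trans hqp
  set δ := Real.sqrt ((p ^ (n - 1) / pqInt p q n) * (x - x ^ 2)) with hδdef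
  have hxx : 0 ≤ x - x ^ 2 := by nlinarith [hx.1, hx.2]
  have hc : 0 < p ^ (n - 1) / pqInt p q n :=
    div_pos (pow_pos hp0 _) (pqInt_pos hp0 hq hn)
  have harg : 0 ≤ (p ^ (n - 1) / pqInt p q n) * (x - x ^ 2) := mul_nonneg hc.le hxx
  have hδsq : δ ^ 2 = (p ^ (n - 1) / pqInt p q n) * (x - x ^ 2) := Real.sq_sqrt harg
  have hBnn : ∀ k, 0 ≤ pqBasis p q n k x := fun k => pqBasis_nonneg hp0 hq hqp.le hx n k
  by_cases hpos : 0 < x - x ^ 2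
  · -- nondegenerate case
    have hδpos : 0 < δ := Real.sqrt_pos.2 (mul_pos hc hpos)
    have hrw : (∑ k ∈ Finset.range (n + 1), pqBasis p q n k x * g (pqNode p q n k)) - g x =
        ∑ k ∈ Finset.range (n + 1), pqBasis p q n k x * (g (pqNode p q n k) - g x) := by
      have h1 : ∀ k : ℕ, pqBasis p q n k x * (g (pqNode p q n k) - g x) =
          pqBasis p q n k x * g (pqNode p q n k) - pqBasis p q n k x * g x :=
        fun k => by ring
      simp only [h1]
      rw [Finset.sum_sub_distrib, ← Finset.sum_mul, pqUnity hp0 hq, one_mul]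
    rw [hrw]
    calc |∑ k ∈ Finset.range (n + 1), pqBasis p q n k x * (g (pqNode p q n k) - g x)|
        ≤ ∑ k ∈ Finset.range (n + 1), |pqBasis p q n k x * (g (pqNode p q n k) - g x)| :=
          Finset.abs_sum_le_sum_abs _ _
      _ ≤ ∑ k ∈ Finset.range (n + 1),
            pqBasis p q n k x * ((1 + (pqNode p q n k - x) ^ 2 / δ ^ 2) * ω) := by
          refine Finset.sum_le_sum fun k hk => ?_
          rw [abs_mul, abs_of_nonneg (hBnn k)]
          refine mul_le_mul_of_nonneg_left ?_ (hBnn k)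
          exact chop g (pqNode_mem hp0 hq hqp.le hn (Nat.lt_succ_iff.1 (Finset.mem_range.1 hk)))
            hx hδpos hω hstep
      _ = 2 * ω := by
          have expand : ∀ k, pqBasis p q n k x * ((1 + (pqNode p q n k - x) ^ 2 / δ ^ 2) * ω) =
              ω * pqBasis p q n k x +
                (ω / δ ^ 2) * (pqBasis p q n k x * (pqNode p q n k - x) ^ 2) := fun k => by
            field_simp
          simp only [expand]
          rw [Finset.sum_add_distrib, ← Finset.mul_sum, ← Finset.mul_sum,
            pqUnity hp0 hq, pqVar hp0 hq hn, ← hδsq, mul_one,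
            div_mul_cancel₀ ω (by positivity : δ ^ 2 ≠ 0)]
          ring
  · -- degenerate case: x = 0 or x = 1
    have hxx0 : x - x ^ 2 = 0 := le_antisymm (not_lt.1 hpos) hxx
    have hcases : x = 0 ∨ x = 1 := by
      rcases mul_eq_zero.1 (show x * (1 - x) = 0 by nlinarith) with h | h
      · exact Or.inl h
      · exact Or.inr (by linarith)
    have heach : ∀ k ∈ Finset.range (n + 1),
        pqBasis p q n k x * g (pqNode p q n k) = pqBasis p q n k x * g x := by
      intro k hk
      have hk' : k ≤ n := Nat.lt_succ_iff.1 (Finset.mem_range.1 hk)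
      rcases hcases with h0 | h1
      · subst h0
        cases k with
        | zero =>
          have : pqNode p q n 0 = 0 := by simp [pqNode, pqInt]
          rw [this]
        | succ j =>
          have : pqBasis p q n (j + 1) 0 = 0 := by
            simp [pqBasis, zero_pow (Nat.succ_ne_zero j)]
          rw [this, zero_mul, zero_mul]
      · subst h1
        rcases eq_or_lt_of_le hk' with he | hlt
        · subst he
          have : pqNode p q k k = 1 := by
            unfold pqNode
            rw [Nat.sub_self, pow_zero, one_mul,
              div_self (pqInt_pos hp0 hq hn).ne']
          rw [this]
        · have hz : (0:ℕ) ∈ Finset.range (n - k) := Finset.mem_range.2 (by omega)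
          have : pqBasis p q n k 1 = 0 := by
            unfold pqBasis
            rw [Finset.prod_eq_zero hz (by simp)]
            ring
          rw [this, zero_mul, zero_mul]
    rw [Finset.sum_congr rfl heach, ← Finset.sum_mul, pqUnity hp0 hq, one_mul,
      sub_self, abs_zero]
    positivity

theorem pqBernstein2_rate_partial_moduli (p₁ q₁ p₂ q₂ : ℝ) (n m : ℕ)
    (hq₁ : 0 < q₁) (hq₁p₁ : q₁ < p₁) (hp₁ : p₁ ≤ 1)
    (hq₂ : 0 < q₂) (hq₂p₂ : q₂ < p₂) (hp₂ : p₂ ≤ 1)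
    (hn : 1 ≤ n) (hm : 1 ≤ m)
    (f : ℝ → ℝ → ℝ)
    (hf : ContinuousOn (fun z : ℝ × ℝ => f z.1 z.2)
      (Set.Icc (0 : ℝ) 1 ×ˢ Set.Icc (0 : ℝ) 1))
    (x y : ℝ) (hx : x ∈ Set.Icc (0 : ℝ) 1) (hy : y ∈ Set.Icc (0 : ℝ) 1) :
    |pqBernstein2 p₁ q₁ p₂ q₂ n m f x y - f x y| ≤
      2 * partialModulus₁ f
        (Real.sqrt ((p₁ ^ (n - 1) / pqInt p₁ q₁ n) * (x - x ^ 2))) +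
      2 * partialModulus₂ f
        (Real.sqrt ((p₂ ^ (m - 1) / pqInt p₂ q₂ m) * (y - y ^ 2))) := by
  have hp₁0 : 0 < p₁ := hq₁.trans hq₁p₁
  have hp₂0 : 0 < p₂ := hq₂.trans hq₂p₂
  have h01 : (0:ℝ) ∈ Set.Icc (0:ℝ) 1 := ⟨le_refl 0, zero_le_one⟩
  set δ₁ := Real.sqrt ((p₁ ^ (n - 1) / pqInt p₁ q₁ n) * (x - x ^ 2)) with hδ₁
  set δ₂ := Real.sqrt ((p₂ ^ (m - 1) / pqInt p₂ q₂ m) * (y - y ^ 2)) with hδ₂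
  -- boundedness of f on the square
  obtain ⟨M, hM⟩ := (isCompact_Icc.prod isCompact_Icc).exists_bound_of_continuousOn hf
  have hM' : ∀ a ∈ Set.Icc (0:ℝ) 1, ∀ b ∈ Set.Icc (0:ℝ) 1, |f a b| ≤ M := by
    intro a ha b hb
    have := hM (a, b) (Set.mk_mem_prod ha hb)
    simpa [Real.norm_eq_abs] using this
  set S₁ : Set ℝ := {d : ℝ | ∃ y ∈ Set.Icc (0 : ℝ) 1, ∃ x₁ ∈ Set.Icc (0 : ℝ) 1,
    ∃ x₂ ∈ Set.Icc (0 : ℝ) 1, |x₁ - x₂| ≤ δ₁ ∧ d = |f x₁ y - f x₂ y|} with hS₁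
  set S₂ : Set ℝ := {d : ℝ | ∃ x ∈ Set.Icc (0 : ℝ) 1, ∃ y₁ ∈ Set.Icc (0 : ℝ) 1,
    ∃ y₂ ∈ Set.Icc (0 : ℝ) 1, |y₁ - y₂| ≤ δ₂ ∧ d = |f x y₁ - f x y₂|} with hS₂
  have hbdd₁ : BddAbove S₁ := by
    refine ⟨2 * M, ?_⟩
    rintro d ⟨y', hy', a, ha, b, hb, -, rfl⟩
    have h1 := hM' a ha y' hy'
    have h2 := hM' b hb y' hy'
    have : |f a y' - f b y'| ≤ |f a y'| + |f b y'| := by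
      rw [sub_eq_add_neg]
      exact (abs_add_le _ _).trans_eq (by rw [abs_neg])
    linarith
  have hbdd₂ : BddAbove S₂ := by
    refine ⟨2 * M, ?_⟩
    rintro d ⟨x', hx', a, ha, b, hb, -, rfl⟩
    have h1 := hM' x' hx' a ha
    have h2 := hM' x' hx' b hb
    have : |f x' a - f x' b| ≤ |f x' a| + |f x' b| := by
      rw [sub_eq_add_neg]
      exact (abs_add_le _ _).trans_eq (by rw [abs_neg])
    linarith
  have hmod₁eq : partialModulus₁ f δ₁ = sSup S₁ := rfl
  have hmod₂eq : partialModulus₂ f δ₂ = sSup S₂ := rfl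
  set ω₁ := partialModulus₁ f δ₁ with hω₁def
  set ω₂ := partialModulus₂ f δ₂ with hω₂def
  have hω₁0 : 0 ≤ ω₁ := by
    exact le_csSup hbdd₁ ⟨0, h01, 0, h01, 0, h01, by simp only [sub_self, abs_zero]; exact hδ₁ ▸ Real.sqrt_nonneg _, by simp⟩
  have hω₂0 : 0 ≤ ω₂ := by
    exact le_csSup hbdd₂ ⟨0, h01, 0, h01, 0, h01, by simp only [sub_self, abs_zero]; exact hδ₂ ▸ Real.sqrt_nonneg _, by simp⟩
  have hstep₁ : ∀ y' ∈ Set.Icc (0:ℝ) 1, ∀ u ∈ Set.Icc (0:ℝ) 1, ∀ v ∈ Set.Icc (0:ℝ) 1,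
      |u - v| ≤ δ₁ → |f u y' - f v y'| ≤ ω₁ := by
    intro y' hy' u hu v hv h
    exact le_csSup hbdd₁ ⟨y', hy', u, hu, v, hv, h, rfl⟩
  have hstep₂ : ∀ x' ∈ Set.Icc (0:ℝ) 1, ∀ u ∈ Set.Icc (0:ℝ) 1, ∀ v ∈ Set.Icc (0:ℝ) 1,
      |u - v| ≤ δ₂ → |f x' u - f x' v| ≤ ω₂ := by
    intro x' hx' u hu v hv h
    exact le_csSup hbdd₂ ⟨x', hx', u, hu, v, hv, h, rfl⟩
  -- decomposition
  have hswap : pqBernstein2 p₁ q₁ p₂ q₂ n m f x y =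
      ∑ j ∈ Finset.range (m + 1), pqBasis p₂ q₂ m j y *
        ∑ k ∈ Finset.range (n + 1), pqBasis p₁ q₁ n k x *
          f (pqNode p₁ q₁ n k) (pqNode p₂ q₂ m j) := by
    unfold pqBernstein2
    rw [Finset.sum_comm]
    refine Finset.sum_congr rfl fun j _ => ?_
    rw [Finset.mul_sum]
    exact Finset.sum_congr rfl fun k _ => by ring
  have hinner : ∀ j ∈ Finset.range (m + 1),
      |(∑ k ∈ Finset.range (n + 1), pqBasis p₁ q₁ n k x *
          f (pqNode p₁ q₁ n k) (pqNode p₂ q₂ m j)) - f x (pqNode p₂ q₂ m j)| ≤ 2 * ω₁ := by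
    intro j hj
    have hσ : pqNode p₂ q₂ m j ∈ Set.Icc (0:ℝ) 1 :=
      pqNode_mem hp₂0 hq₂ hq₂p₂.le hm (Nat.lt_succ_iff.1 (Finset.mem_range.1 hj))
    exact pqCore hq₁ hq₁p₁ hp₁ hn (fun a => f a (pqNode p₂ q₂ m j)) hx hω₁0
      (fun u hu v hv h => hstep₁ (pqNode p₂ q₂ m j) hσ u hu v hv h)
  have houter : |(∑ j ∈ Finset.range (m + 1), pqBasis p₂ q₂ m j y * f x (pqNode p₂ q₂ m j))
      - f x y| ≤ 2 * ω₂ :=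
    pqCore hq₂ hq₂p₂ hp₂ hm (fun b => f x b) hy hω₂0
      (fun u hu v hv h => hstep₂ x hx u hu v hv h)
  have hSnn : ∀ j, 0 ≤ pqBasis p₂ q₂ m j y := fun j =>
    pqBasis_nonneg hp₂0 hq₂ hq₂p₂.le hy m j
  have hfirst : |∑ j ∈ Finset.range (m + 1), pqBasis p₂ q₂ m j y *
      ((∑ k ∈ Finset.range (n + 1), pqBasis p₁ q₁ n k x *
          f (pqNode p₁ q₁ n k) (pqNode p₂ q₂ m j)) - f x (pqNode p₂ q₂ m j))| ≤ 2 * ω₁ := by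
    calc |∑ j ∈ Finset.range (m + 1), pqBasis p₂ q₂ m j y *
        ((∑ k ∈ Finset.range (n + 1), pqBasis p₁ q₁ n k x *
            f (pqNode p₁ q₁ n k) (pqNode p₂ q₂ m j)) - f x (pqNode p₂ q₂ m j))|
        ≤ ∑ j ∈ Finset.range (m + 1), |pqBasis p₂ q₂ m j y *
            ((∑ k ∈ Finset.range (n + 1), pqBasis p₁ q₁ n k x *
                f (pqNode p₁ q₁ n k) (pqNode p₂ q₂ m j)) - f x (pqNode p₂ q₂ m j))| :=
          Finset.abs_sum_le_sum_abs _ _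
      _ ≤ ∑ j ∈ Finset.range (m + 1), pqBasis p₂ q₂ m j y * (2 * ω₁) := by
          refine Finset.sum_le_sum fun j hj => ?_
          rw [abs_mul, abs_of_nonneg (hSnn j)]
          exact mul_le_mul_of_nonneg_left (hinner j hj) (hSnn j)
      _ = 2 * ω₁ := by
          rw [← Finset.sum_mul, pqUnity hp₂0 hq₂, one_mul]
  have hdecomp : pqBernstein2 p₁ q₁ p₂ q₂ n m f x y - f x y =
      (∑ j ∈ Finset.range (m + 1), pqBasis p₂ q₂ m j y *
        ((∑ k ∈ Finset.range (n + 1), pqBasis p₁ q₁ n k x *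
            f (pqNode p₁ q₁ n k) (pqNode p₂ q₂ m j)) - f x (pqNode p₂ q₂ m j))) +
      ((∑ j ∈ Finset.range (m + 1), pqBasis p₂ q₂ m j y * f x (pqNode p₂ q₂ m j)) - f x y) := by
    rw [hswap]
    have h1 : ∀ j : ℕ, pqBasis p₂ q₂ m j y *
        ((∑ k ∈ Finset.range (n + 1), pqBasis p₁ q₁ n k x *
            f (pqNode p₁ q₁ n k) (pqNode p₂ q₂ m j)) - f x (pqNode p₂ q₂ m j)) =
        pqBasis p₂ q₂ m j y * (∑ k ∈ Finset.range (n + 1), pqBasis p₁ q₁ n k x *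
            f (pqNode p₁ q₁ n k) (pqNode p₂ q₂ m j)) -
          pqBasis p₂ q₂ m j y * f x (pqNode p₂ q₂ m j) := fun j => by ring
    simp only [h1]
    rw [Finset.sum_sub_distrib]
    ring
  rw [hdecomp]
  calc |_ + _| ≤ _ + _ := abs_add_le _ _
    _ ≤ 2 * ω₁ + 2 * ω₂ := add_le_add hfirst houter
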